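/- Let b ≥ 2 be an integer and let Z ⊂ ℂ be countable and symmetric with respect to the real axis (i.e., z ∈ Z implies z̄ ∈ Z). Then Z is exponentially b-nonresonant if and only if for every z ∈ Z, Re z does not lie in the ℚ-linear span of the set {(ln b / π)·Im w : w ∈ Z, Re w = Re z}. -/

import Mathlib

open MeasureTheory Filter Set
open scoped Classical

/-- Base-`b` significand: `S_b(x) ∈ [1,b)` with `|x| = S_b(x)·b^k`; `S_b(0)=0`. -/
noncomputable def significand (b : ℕ) (x : ℝ) : ℝ :=
  if x = 0 then 0 else |x| / (b : ℝ) ^ (Int.log b |x|)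

/-- `f` is `b`-Benford. -/
noncomputable def IsBenford (b : ℕ) (f : ℝ → ℝ) : Prop :=
  ∀ s : ℝ, 1 ≤ s → s < (b : ℝ) →
    Tendsto (fun T : ℝ =>
        (volume {t : ℝ | 0 ≤ t ∧ t ≤ T ∧ significand b (f t) ≤ s}).toReal / T)
      atTop (nhds (Real.logb b s))

/-- A subset of the circle `ℝ/ℤ` is an arc if it is the image of an interval. -/
def IsArc (J : Set UnitAddCircle) : Prop :=
  ∃ a c : ℝ, J = (fun x : ℝ => (x : UnitAddCircle)) '' Set.Ico a c

/-- `f` is continuously uniformly distributed mod 1. -/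
noncomputable def CUDMod1 (f : ℝ → ℝ) : Prop :=
  ∀ J : Set UnitAddCircle, IsArc J →
    Tendsto (fun T : ℝ =>
        (volume {t : ℝ | 0 ≤ t ∧ t ≤ T ∧ ((f t : UnitAddCircle) ∈ J)}).toReal / T)
      atTop (nhds ((volume J).toReal))

/-- A sequence (indexed from 1) is uniformly distributed mod 1. -/
noncomputable def UDMod1 (x : ℕ → ℝ) : Prop :=
  ∀ J : Set UnitAddCircle, IsArc J →
    Tendsto (fun N : ℕ =>
        ((Finset.Icc 1 N).filter (fun n => ((x n : UnitAddCircle) ∈ J))).card / (N : ℝ))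
      atTop (nhds ((volume J).toReal))

/-- The set `Δ_W` associated with `W ⊆ ℂ`. -/
noncomputable def deltaSet (W : Set ℂ) : Set ℝ :=
  {x | ∃ z ∈ W, ∃ w ∈ W, x = 1 + (Complex.arg z - Complex.arg w) / (2 * Real.pi)}

/-- `W ⊆ ℂ` is `b`-nonresonant. -/
noncomputable def BNonresonant (b : ℕ) (W : Set ℂ) : Prop :=
  ∀ r : ℝ, 0 < r → (W ∩ {z | ‖z‖ = r}).Nonempty →
    (deltaSet (W ∩ {z | ‖z‖ = r}) ∩ Set.range ((↑) : ℚ → ℝ) = {1}) ∧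
    Real.logb b r ∉ Submodule.span ℚ (deltaSet (W ∩ {z | ‖z‖ = r}))

/-- `Z ⊆ ℂ` is exponentially `b`-nonresonant. -/
noncomputable def ExpBNonresonant (b : ℕ) (Z : Set ℂ) : Prop :=
  ∃ t : ℝ, 0 ≤ t ∧ BNonresonant b ((fun z => Complex.exp (t * z)) '' Z)

/-- The spectrum (set of complex eigenvalues) of a real square matrix. -/
noncomputable def realSpectrum {d : ℕ} (A : Matrix (Fin d) (Fin d) ℝ) : Set ℂ :=
  spectrum ℂ (A.map (algebraMap ℝ ℂ))

open Real in
lemma my_arg_exp (u : ℂ) : ∃ m : ℤ, Complex.arg (Complex.exp u) = u.im - 2*Real.pi*m := by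
  set m : ℤ := toIocDiv Real.two_pi_pos (-π) u.im with hm
  refine ⟨m, ?_⟩
  have hmem : u.im - m • (2*π) ∈ Set.Ioc (-π) (-π + 2*π) :=
    sub_toIocDiv_zsmul_mem_Ioc Real.two_pi_pos (-π) u.im
  rw [show -π + 2*π = π by ring] at hmem
  set v : ℂ := u - (m : ℂ) * (2 * Real.pi * Complex.I) with hv
  have hvim : v.im = u.im - 2*Real.pi*m := by
    simp [hv, Complex.sub_im, Complex.mul_im]; ring
  have hexp : Complex.exp u = Complex.exp v := by
    rw [hv, Complex.exp_sub, Complex.exp_int_mul_two_pi_mul_I, div_one]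
  have h1 : -π < v.im := by rw [hvim]; simpa [zsmul_eq_mul, mul_comm] using hmem.1
  have h2 : v.im ≤ π := by rw [hvim]; simpa [zsmul_eq_mul, mul_comm] using hmem.2
  rw [hexp, ← Complex.log_im, Complex.log_exp h1 h2, hvim]

lemma my_countable_span {s : Set ℝ} (hs : s.Countable) :
    ((Submodule.span ℚ s : Submodule ℚ ℝ) : Set ℝ).Countable := by
  haveI := hs.to_subtype
  have h : ((Submodule.span ℚ s : Submodule ℚ ℝ) : Set ℝ) ⊆
      ⋃ n : ℕ, Set.range (fun p : (Fin n → ℚ) × (Fin n → s) => ∑ i, (p.1 i : ℝ) • (p.2 i : ℝ)) := by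
    intro x hx
    obtain ⟨n, f, g, hx⟩ := Submodule.mem_span_set'.1 hx
    exact Set.mem_iUnion.2 ⟨n, ⟨(f, g), hx⟩⟩
  exact (Set.countable_iUnion fun n => Set.countable_range _).mono h

lemma my_abs_exp (t : ℝ) (z : ℂ) :
    ‖Complex.exp (t * z)‖ = Real.exp (t * z.re) := by
  rw [Complex.norm_exp, Complex.re_ofReal_mul]

lemma my_delta_form (t : ℝ) (z w : ℂ) :
    ∃ k : ℤ, 1 + (Complex.arg (Complex.exp (t*z)) - Complex.arg (Complex.exp (t*w))) / (2*Real.pi)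
      = 1 + k + t*(z.im - w.im)/(2*Real.pi) := by
  obtain ⟨m1, h1⟩ := my_arg_exp ((t:ℂ)*z)
  obtain ⟨m2, h2⟩ := my_arg_exp ((t:ℂ)*w)
  refine ⟨m2 - m1, ?_⟩
  rw [h1, h2, Complex.im_ofReal_mul, Complex.im_ofReal_mul]
  have hπ : (2*Real.pi) ≠ 0 := by positivity
  push_cast
  field_simp
  ring

noncomputable def mulLin (t : ℝ) : ℝ →ₗ[ℚ] ℝ where
  toFun := fun x => t * x
  map_add' := by intros; ring
  map_smul' := by intro q x; simp only [Rat.smul_def, RingHom.id_apply]; ring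

/-- characterization of exponential `b`-nonresonance for countable,
conjugation-symmetric sets. -/
theorem expNonresonant_iff_re_not_mem_span (b : ℕ) (hb : 2 ≤ b) (Z : Set ℂ)
    (hc : Z.Countable) (hsym : ∀ z ∈ Z, (starRingEnd ℂ) z ∈ Z) :
    ExpBNonresonant b Z ↔ ∀ z ∈ Z,
      z.re ∉ Submodule.span ℚ
        {x : ℝ | ∃ w ∈ Z, w.re = z.re ∧ x = Real.log b / Real.pi * w.im} := by
  have hb2 : (2:ℝ) ≤ (b:ℝ) := by exact_mod_cast hb
  have hlb : Real.log b ≠ 0 := ne_of_gt (Real.log_pos (by linarith))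
  have hπ : Real.pi ≠ 0 := Real.pi_ne_zero
  constructor
  · rintro ⟨t, ht0, hBN⟩ z hz hmem
    have htne : t ≠ 0 := by
      rintro rfl
      have h1 : (((fun z => Complex.exp ((0:ℝ) * z)) '' Z) ∩ {w | ‖w‖ = 1}).Nonempty :=
        ⟨1, ⟨z, hz, by simp⟩, by simp⟩
      have h2 := (hBN 1 one_pos h1).2
      rw [Real.logb_one] at h2
      exact h2 (zero_mem _)
    have ht : 0 < t := lt_of_le_of_ne ht0 (Ne.symm htne)
    set W := (fun z => Complex.exp ((t:ℝ) * z)) '' Z with hW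
    set r := Real.exp (t * z.re) with hr
    have hrpos : 0 < r := Real.exp_pos _
    have hmemW : ∀ w ∈ Z, w.re = z.re →
        Complex.exp ((t:ℝ) * w) ∈ W ∩ {v | ‖v‖ = r} := by
      intro w hw hwre
      exact ⟨⟨w, hw, rfl⟩, by simp only [Set.mem_setOf_eq, my_abs_exp, hwre, hr]⟩
    have hne : (W ∩ {v | ‖v‖ = r}).Nonempty := ⟨_, hmemW z hz rfl⟩
    obtain ⟨hQ, hspan⟩ := hBN r hrpos hne
    apply hspan
    set Δ := deltaSet (W ∩ {v | ‖v‖ = r}) with hΔ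
    obtain ⟨v, hv⟩ := hne
    have hone : (1:ℝ) ∈ Δ := ⟨v, hv, v, hv, by ring⟩
    have hint : ∀ k : ℤ, ((1:ℝ) + k) ∈ Submodule.span ℚ Δ := by
      intro k
      have := Submodule.smul_mem (Submodule.span ℚ Δ) ((1+k : ℚ)) (Submodule.subset_span hone)
      rw [Rat.smul_def] at this
      convert this using 1
      push_cast; ring
    have hgen : ∀ w ∈ Z, w.re = z.re → t * w.im / Real.pi ∈ Submodule.span ℚ Δ := by
      intro w hw hwre
      have hwc : (starRingEnd ℂ) w ∈ Z := hsym w hw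
      have h1 := hmemW w hw hwre
      have h2 := hmemW _ hwc (by simp [Complex.conj_re, hwre])
      obtain ⟨k, hk⟩ := my_delta_form t w ((starRingEnd ℂ) w)
      have hδmem : (1 + (Complex.arg (Complex.exp ((t:ℝ)*w)) -
          Complex.arg (Complex.exp ((t:ℝ)*((starRingEnd ℂ) w)))) / (2*Real.pi)) ∈ Δ :=
        ⟨_, h1, _, h2, rfl⟩
      rw [hk] at hδmem
      have heq : t * w.im / Real.pi = (1 + (k:ℝ) + t*(w.im - ((starRingEnd ℂ) w).im)/(2*Real.pi)) - (1 + k) := by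
        rw [Complex.conj_im]
        field_simp
        ring
      rw [heq]
      exact sub_mem (Submodule.subset_span hδmem) (hint k)
    have hscale : ∀ x ∈ Submodule.span ℚ
        {x : ℝ | ∃ w ∈ Z, w.re = z.re ∧ x = Real.log b / Real.pi * w.im},
        (t / Real.log b) * x ∈ Submodule.span ℚ Δ := by
      intro x hx
      induction hx using Submodule.span_induction with
      | mem x hx =>
          obtain ⟨w, hw, hwre, rfl⟩ := hx
          have := hgen w hw hwre
          convert this using 1
          field_simp
      | zero => simpa using zero_mem _
      | add x y _ _ hx hy => rw [mul_add]; exact add_mem hx hy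
      | smul q x _ hx =>
          rw [Rat.smul_def]
          have := Submodule.smul_mem _ q hx
          rw [Rat.smul_def] at this
          convert this using 1
          ring
    have hlogbr : Real.logb b r = (t / Real.log b) * z.re := by
      rw [hr, Real.logb, Real.log_exp]; ring
    rw [hlogbr]
    exact hscale z.re hmem
  · intro h
    -- bad sets
    set genSet : ℂ → Set ℝ := fun z => {x : ℝ | ∃ w ∈ Z, w.re = z.re ∧ x = w.im / Real.pi}
      with hgenSet
    have hgenCount : ∀ z, (genSet z).Countable := by
      intro z
      refine (hc.image (fun w => w.im / Real.pi)).mono ?_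
      rintro x ⟨w, hw, _, rfl⟩
      exact ⟨w, hw, rfl⟩
    set badA : ℂ → ℂ → Set ℝ := fun z w =>
      {x : ℝ | ∃ q : ℚ, x * (z.im - w.im) = 2*Real.pi*q ∧ z.im ≠ w.im} with hbadA
    set badB : ℂ → Set ℝ := fun z =>
      {x : ℝ | ∃ q : ℚ, ∃ y ∈ Submodule.span ℚ (genSet z),
        x * (z.re / Real.log b - y) = q ∧ z.re / Real.log b - y ≠ 0} with hbadB
    have hbadACount : ∀ z w, (badA z w).Countable := by
      intro z w
      by_cases him : z.im = w.im
      · convert Set.countable_empty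
        ext x; simp only [hbadA, Set.mem_setOf_eq, Set.mem_empty_iff_false, iff_false]
        rintro ⟨q, _, hne⟩; exact hne him
      · refine (Set.countable_range (fun q : ℚ => 2*Real.pi*q / (z.im - w.im))).mono ?_
        rintro x ⟨q, hq, _⟩
        refine ⟨q, ?_⟩
        rw [div_eq_iff (sub_ne_zero.2 him)]
        linarith [hq]
    have hbadBCount : ∀ z, (badB z).Countable := by
      intro z
      haveI := (my_countable_span (hgenCount z)).to_subtype
      refine (Set.countable_range
        (fun p : ℚ × ↥((Submodule.span ℚ (genSet z) : Submodule ℚ ℝ) : Set ℝ) =>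
          (p.1 : ℝ) / (z.re / Real.log b - (p.2 : ℝ)))).mono ?_
      rintro x ⟨q, y, hy, hxq, hne⟩
      exact ⟨(q, ⟨y, hy⟩), (div_eq_iff hne).2 hxq.symm⟩
    set Bad : Set ℝ := (⋃ z ∈ Z, ⋃ w ∈ Z, badA z w) ∪ (⋃ z ∈ Z, badB z) with hBad
    have hBadCount : Bad.Countable := by
      refine Set.Countable.union ?_ ?_
      · exact hc.biUnion (fun z _ => hc.biUnion (fun w _ => hbadACount z w))
      · exact hc.biUnion (fun z _ => hbadBCount z)
    have hex : ∃ t : ℝ, t ∈ Set.Ioi (0:ℝ) \ Bad := by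
      by_contra hcon
      push_neg at hcon
      have hsub : Set.Ioi (0:ℝ) ⊆ Bad := by
        intro x hx
        by_contra hxB
        exact hcon x ⟨hx, hxB⟩
      have := measure_mono (μ := volume) hsub
      rw [hBadCount.measure_zero, Real.volume_Ioi] at this
      simp at this
    obtain ⟨t, ht, htB⟩ := hex
    have ht0 : (0:ℝ) < t := ht
    refine ⟨t, le_of_lt ht0, ?_⟩
    intro r hrpos hne
    set W := (fun z => Complex.exp ((t:ℝ) * z)) '' Z with hW
    obtain ⟨v, ⟨z₀, hz₀, rfl⟩, hv⟩ := hne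
    have hv' : Real.exp (t * z₀.re) = r := by rwa [Set.mem_setOf_eq, my_abs_exp] at hv
    have hreeq : ∀ z ∈ Z, ‖Complex.exp ((t:ℝ)*z)‖ = r → z.re = z₀.re := by
      intro z hz habs
      rw [my_abs_exp, ← hv', Real.exp_eq_exp] at habs
      exact mul_left_cancel₀ (ne_of_gt ht0) habs
    constructor
    · ext x
      simp only [Set.mem_inter_iff, Set.mem_singleton_iff]
      constructor
      · rintro ⟨⟨a, ⟨⟨z1, hz1, rfl⟩, ha⟩, a2, ⟨⟨z2, hz2, rfl⟩, ha2⟩, rfl⟩, q, hq⟩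
        obtain ⟨k, hk⟩ := my_delta_form t z1 z2
        have him : z1.im = z2.im := by
          by_contra him
          apply htB
          refine Or.inl (Set.mem_biUnion hz1 (Set.mem_biUnion hz2 ?_))
          refine ⟨q - 1 - k, ?_, him⟩
          have hqv : (q:ℝ) = 1 + k + t*(z1.im - z2.im)/(2*Real.pi) := hq.trans hk
          have h1 : t*(z1.im - z2.im)/(2*Real.pi) = (q:ℝ) - 1 - (k:ℝ) := by linarith
          have h2 : t*(z1.im - z2.im) = 2*Real.pi*((q:ℝ) - 1 - (k:ℝ)) := by
            rw [← h1]
            field_simp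
          push_cast
          linarith [h2]
        have hz12 : z1 = z2 := by
          apply Complex.ext
          · rw [hreeq z1 hz1 ha, hreeq z2 hz2 ha2]
          · exact him
        rw [hz12]
        ring
      · rintro rfl
        refine ⟨⟨_, ⟨⟨z₀, hz₀, rfl⟩, hv⟩, _, ⟨⟨z₀, hz₀, rfl⟩, hv⟩, by ring⟩, 1, by norm_num⟩
    · intro hmem
      set V := Submodule.span ℚ (genSet z₀) with hV
      set Usub := (Submodule.span ℚ {(1:ℝ)}) ⊔ V.map (mulLin t) with hU
      have hΔU : deltaSet (W ∩ {v | ‖v‖ = r}) ⊆ (Usub : Set ℝ) := by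
        rintro x ⟨a, ⟨⟨z1, hz1, rfl⟩, ha⟩, a2, ⟨⟨z2, hz2, rfl⟩, ha2⟩, rfl⟩
        obtain ⟨k, hk⟩ := my_delta_form t z1 z2
        rw [hk]
        have hy : (z1.im - z2.im)/(2*Real.pi) ∈ V := by
          have h1 : z1.im/Real.pi ∈ genSet z₀ := ⟨z1, hz1, hreeq z1 hz1 ha, rfl⟩
          have h2 : z2.im/Real.pi ∈ genSet z₀ := ⟨z2, hz2, hreeq z2 hz2 ha2, rfl⟩
          have heq : (z1.im - z2.im)/(2*Real.pi)
              = ((1/2 : ℚ) : ℝ) * (z1.im/Real.pi) - ((1/2 : ℚ) : ℝ) * (z2.im/Real.pi) := by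
            push_cast
            ring
          rw [heq]
          refine sub_mem ?_ ?_
          · have := Submodule.smul_mem V (1/2 : ℚ) (Submodule.subset_span h1)
            rwa [Rat.smul_def] at this
          · have := Submodule.smul_mem V (1/2 : ℚ) (Submodule.subset_span h2)
            rwa [Rat.smul_def] at this
        refine Submodule.mem_sup.2 ⟨1 + k, ?_, t * ((z1.im - z2.im)/(2*Real.pi)),
          ⟨_, hy, rfl⟩, by ring⟩
        refine Submodule.mem_span_singleton.2 ⟨(1 + k : ℚ), ?_⟩
        rw [Rat.smul_def]; push_cast; ring
      have hmemU : Real.logb b r ∈ Usub :=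
        Submodule.span_le.2 hΔU hmem
      obtain ⟨aa, haa, bb, ⟨y, hy, rfl⟩, heq⟩ := Submodule.mem_sup.1 hmemU
      obtain ⟨q, hq⟩ := Submodule.mem_span_singleton.1 haa
      rw [Rat.smul_def, mul_one] at hq
      have hlogbr : Real.logb b r = t * z₀.re / Real.log b := by
        rw [← hv', Real.logb, Real.log_exp]
      have hmul : mulLin t y = t * y := rfl
      rw [hmul, ← hq, hlogbr] at heq
      have hkey : t * (z₀.re / Real.log b - y) = (q:ℝ) := by
        have h2 : (q:ℝ) = t * z₀.re / Real.log b - t * y := by linarith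
        rw [h2]
        ring
      have hspan2 : ∀ y ∈ V, Real.log b * y ∈ Submodule.span ℚ
          {x : ℝ | ∃ w ∈ Z, w.re = z₀.re ∧ x = Real.log b / Real.pi * w.im} := by
        intro y hy
        induction hy using Submodule.span_induction with
        | mem x hx =>
            obtain ⟨w, hw, hwre, rfl⟩ := hx
            refine Submodule.subset_span ⟨w, hw, hwre, ?_⟩
            field_simp
        | zero => simpa using zero_mem _
        | add x y _ _ hx hy => rw [mul_add]; exact add_mem hx hy
        | smul q x _ hx =>
            rw [Rat.smul_def]
            have := Submodule.smul_mem _ q hx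
            rw [Rat.smul_def] at this
            convert this using 1
            ring
      have hynz : z₀.re / Real.log b - y ≠ 0 := by
        intro h0
        have hzre : z₀.re = Real.log b * y := by
          field_simp at h0
          linarith
        have hmem2 := hspan2 y hy
        rw [← hzre] at hmem2
        exact h z₀ hz₀ hmem2
      apply htB
      exact Or.inr (Set.mem_biUnion hz₀ ⟨q, y, hy, hkey, hynz⟩)
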